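/- arXiv:2012.05943 — 3 statements merged into one kernel-verified Lean document; each statement's English description precedes it below -/
import Mathlib

section
/- Let P ∈ ℝ^{n×n} be symmetric with P_{ii} > 0, let d ∈ ℝⁿ, and let F(x) = (1/2)xᵀPx + dᵀx. Let x ∈ ℝⁿ with x ≥ 0 componentwise, fix i ∈ {1,…,n}, set x̂_i = max(0, x_i − (Px + d)_i / P_{ii}), and let x⁺ = x + (x̂_i − x_i)e_i. Then F(x⁺) − F(x) ≤ −(P_{ii}/2)‖x⁺ − x‖², where ‖·‖ is the Euclidean norm. In particular F(x⁺) ≤ F(x) and x⁺ ≥ 0. -/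
open Matrix Finset

/-- sufficient decrease of the greedy CD coordinate update:
`F(x⁺) − F(x) ≤ −(P_{ii}/2) ‖x⁺ − x‖²`, `F(x⁺) ≤ F(x)` and `x⁺ ≥ 0`. -/
theorem stmt1 (n : ℕ) (P : Matrix (Fin n) (Fin n) ℝ) (hP : P.IsSymm)
    (d : Fin n → ℝ) (F : (Fin n → ℝ) → ℝ)
    (hF : ∀ x, F x = (1 / 2) * (x ⬝ᵥ (P *ᵥ x)) + d ⬝ᵥ x)
    (x : Fin n → ℝ) (hx : 0 ≤ x) (i : Fin n) (hPii : 0 < P i i)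
    (xhat : ℝ) (hxhat : xhat = max 0 (x i - (P *ᵥ x + d) i / P i i))
    (xp : Fin n → ℝ) (hxp : xp = x + (xhat - x i) • (Pi.single i 1 : Fin n → ℝ)) :
    F xp - F x ≤ -(P i i / 2) * ∑ j, (xp j - x j) ^ 2 ∧ F xp ≤ F x ∧ 0 ≤ xp := by
  set t : ℝ := xhat - x i with ht
  set g : ℝ := (P *ᵥ x + d) i with hg
  clear_value t g
  have hPe : ∀ j, (P *ᵥ (Pi.single i 1 : Fin n → ℝ)) j = P j i := by
    intro j; simp [Matrix.mulVec, dotProduct, Pi.single_apply]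
  have hcross : x ⬝ᵥ (P *ᵥ (Pi.single i 1 : Fin n → ℝ)) = (P *ᵥ x) i := by
    have h1 : x ⬝ᵥ (P *ᵥ (Pi.single i 1 : Fin n → ℝ)) = ∑ j, x j * P j i := by
      simp only [dotProduct]
      exact Finset.sum_congr rfl fun j _ => by rw [hPe]
    rw [h1]
    simp only [Matrix.mulVec, dotProduct]
    exact Finset.sum_congr rfl fun j _ => by rw [hP.apply j i]; ring
  have hsd : ∀ v : Fin n → ℝ, (Pi.single i 1 : Fin n → ℝ) ⬝ᵥ v = v i := fun v => by
    simp [single_dotProduct]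
  have hde : d ⬝ᵥ (Pi.single i 1 : Fin n → ℝ) = d i := by
    simp [dotProduct_single]
  have hee : (Pi.single i 1 : Fin n → ℝ) ⬝ᵥ (P *ᵥ (Pi.single i 1 : Fin n → ℝ)) = P i i := by
    rw [hsd, hPe]
  have hdiff : F xp - F x = t * g + t ^ 2 / 2 * P i i := by
    rw [hF, hF, hxp]
    simp only [mulVec_add, mulVec_smul, dotProduct_add, add_dotProduct, smul_dotProduct,
      dotProduct_smul, smul_eq_mul, hcross, hsd, hee, hde, hPe]
    have h5 : (P *ᵥ x + d) i = (P *ᵥ x) i + d i := rfl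
    rw [hg, h5]
    ring
  have hsum : ∑ j, (xp j - x j) ^ 2 = t ^ 2 := by
    rw [hxp]
    have h6 : ∀ j, (x + t • (Pi.single i 1 : Fin n → ℝ)) j - x j
        = t * (Pi.single i 1 : Fin n → ℝ) j := by
      intro j; simp
    simp only [h6]
    rw [Finset.sum_eq_single i]
    · simp
    · intro b _ hb; simp [Pi.single_apply, hb]
    · simp
  have hkey : t * g + t ^ 2 * P i i ≤ 0 := by
    rcases le_or_gt 0 (x i - g / P i i) with h | h
    · have hxe : xhat = x i - g / P i i := by rw [hxhat, max_eq_right h]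
      have htv : t * P i i = -g := by
        rw [ht, hxe]; field_simp; ring
      have h0 : t * g + t ^ 2 * P i i = t * (g + t * P i i) := by ring
      rw [h0]
      have : g + t * P i i = 0 := by linarith
      rw [this, mul_zero]
    · have hxe : xhat = 0 := by rw [hxhat, max_eq_left h.le]
      have htv : t = -x i := by rw [ht, hxe]; ring
      have hgi : 0 < g - x i * P i i := by
        have := mul_pos (neg_pos.mpr h) hPii
        have hne : P i i ≠ 0 := ne_of_gt hPii
        field_simp at this
        nlinarith
      have hxi : 0 ≤ x i := hx i
      rw [htv]
      nlinarith [mul_nonneg hxi hgi.le]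
  have h1 : F xp - F x ≤ -(P i i / 2) * ∑ j, (xp j - x j) ^ 2 := by
    rw [hdiff, hsum]
    have h2 : t * g + t ^ 2 / 2 * P i i - (-(P i i / 2) * t ^ 2)
        = t * g + t ^ 2 * P i i := by ring
    linarith
  refine ⟨h1, ?_, ?_⟩
  · have hs : 0 ≤ ∑ j, (xp j - x j) ^ 2 := Finset.sum_nonneg fun j _ => sq_nonneg _
    nlinarith
  · intro j
    rw [hxp]
    rcases eq_or_ne j i with rfl | hj
    · simp only [Pi.add_apply, Pi.smul_apply, Pi.single_eq_same, smul_eq_mul, mul_one]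
      have : 0 ≤ xhat := by rw [hxhat]; exact le_max_left _ _
      simp; linarith
    · simp only [Pi.add_apply, Pi.smul_apply, Pi.single_apply, hj, if_false, smul_eq_mul,
        mul_zero, add_zero]
      exact hx j
end

section
/- Let P ∈ ℝ^{n×n} be symmetric positive semidefinite with P_{ii} > 0 for all i, let d ∈ ℝⁿ, and let F(x) = (1/2)xᵀPx + dᵀx. Let {x^k}_{k≥0} ⊂ ℝⁿ be a greedy CD sequence: x^0 ≥ 0, and for each k there is a coordinate i_k such that x^{k+1} = x^k + (x̂^k_{i_k} − x^k_{i_k})e_{i_k} where x̂^k_i = max(0, x^k_i − (Px^k + d)_i / P_{ii}), and the greedy selection holds: for every coordinate i ∈ {1,…,n}, F(x^{k+1}) ≤ F(x^k + (x̂^k_i − x^k_i)e_i). Suppose the lower level set L_0 = {x ∈ ℝⁿ : x ≥ 0, F(x) ≤ F(x^0)} is compact. Then F(x^k) converges as k → ∞ to F* = inf{F(x) : x ≥ 0}, the optimal value of the NQP. -/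
open Matrix Finset Filter Topology

section Helpers
variable {n : ℕ} (P : Matrix (Fin n) (Fin n) ℝ)

private lemma cd_symm_dot (hP : P.PosSemidef) (v w : Fin n → ℝ) :
    v ⬝ᵥ (P *ᵥ w) = w ⬝ᵥ (P *ᵥ v) := by
  rw [Matrix.dotProduct_mulVec, ← Matrix.mulVec_transpose,
    show Pᵀ = P by simpa [Matrix.IsHermitian] using hP.1]
  exact dotProduct_comm _ _

private lemma cd_expandF (hP : P.PosSemidef) (d : Fin n → ℝ) (x : Fin n → ℝ) (i : Fin n) (δ : ℝ) :
    (1/2) * ((x + δ • (Pi.single i 1 : Fin n → ℝ)) ⬝ᵥ (P *ᵥ (x + δ • (Pi.single i 1 : Fin n → ℝ))))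
      + d ⬝ᵥ (x + δ • (Pi.single i 1 : Fin n → ℝ))
    = ((1/2) * (x ⬝ᵥ (P *ᵥ x)) + d ⬝ᵥ x) + ((P *ᵥ x + d) i) * δ + (1/2) * P i i * δ^2 := by
  have h1 : x ⬝ᵥ (P *ᵥ (Pi.single i 1 : Fin n → ℝ)) = (P *ᵥ x) i := by
    rw [cd_symm_dot P hP]; simp
  have h2 : (Pi.single i 1 : Fin n → ℝ) ⬝ᵥ (P *ᵥ x) = (P *ᵥ x) i := by simp
  have h3 : (Pi.single i 1 : Fin n → ℝ) ⬝ᵥ (P *ᵥ (Pi.single i 1 : Fin n → ℝ)) = P i i := by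
    simp [Matrix.mulVec_single]
  have h4 : d ⬝ᵥ (Pi.single i 1 : Fin n → ℝ) = d i := by simp
  simp only [Matrix.mulVec_add, Matrix.mulVec_smul, dotProduct_add,
    add_dotProduct, dotProduct_smul, smul_dotProduct, smul_eq_mul,
    h1, h2, h3, h4, Pi.add_apply]
  ring

private lemma cd_gradIneq (hP : P.PosSemidef) (d : Fin n → ℝ) (x y : Fin n → ℝ) :
    (1/2) * (x ⬝ᵥ (P *ᵥ x)) + d ⬝ᵥ x + (P *ᵥ x + d) ⬝ᵥ (y - x)
      ≤ (1/2) * (y ⬝ᵥ (P *ᵥ y)) + d ⬝ᵥ y := by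
  have key : (1/2) * ((y-x) ⬝ᵥ (P *ᵥ (y-x)))
      = (1/2) * (y ⬝ᵥ (P *ᵥ y)) + d ⬝ᵥ y
        - ((1/2) * (x ⬝ᵥ (P *ᵥ x)) + d ⬝ᵥ x + (P *ᵥ x + d) ⬝ᵥ (y - x)) := by
    simp only [Matrix.mulVec_sub, dotProduct_sub, sub_dotProduct,
      add_dotProduct]
    rw [cd_symm_dot P hP y x, dotProduct_comm (P *ᵥ x) x, Matrix.dotProduct_mulVec x P y,
      ← Matrix.mulVec_transpose, show Pᵀ = P by simpa [Matrix.IsHermitian] using hP.1]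
    rw [dotProduct_comm (P *ᵥ x) y]
    ring
  have pos : 0 ≤ (y-x) ⬝ᵥ (P *ᵥ (y-x)) := by simpa using hP.dotProduct_mulVec_nonneg (y-x)
  linarith

end Helpers

private lemma cd_min1d (p g xi : ℝ) (hp : 0 < p) (t : ℝ) (ht : 0 ≤ t) :
    g * (max 0 (xi - g/p) - xi) + p/2 * (max 0 (xi - g/p) - xi)^2
      ≤ g * (t - xi) + p/2 * (t - xi)^2 := by
  rcases le_or_gt 0 (xi - g/p) with h | h
  · rw [max_eq_right h]
    have hg : g = p * (g / p) := by field_simp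
    nlinarith [sq_nonneg (t - xi + g/p), sq_nonneg (g/p)]
  · rw [max_eq_left h.le]
    have hpx : p * xi < g := by
      have := (sub_neg.mp h)
      calc p * xi < p * (g/p) := by exact mul_lt_mul_of_pos_left this hp
        _ = g := by field_simp
    nlinarith [mul_nonneg ht (by nlinarith : (0:ℝ) ≤ g + p/2*t - p*xi)]

private lemma cd_kkt1d (p g xi : ℝ) (hp : 0 < p) (hxi : 0 ≤ xi)
    (hq : 0 ≤ g * (max 0 (xi - g/p) - xi) + p/2 * (max 0 (xi - g/p) - xi)^2) :
    0 ≤ g ∧ g * xi = 0 := by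
  rcases le_or_gt 0 (xi - g/p) with h | h
  · rw [max_eq_right h] at hq
    have hg : g = p * (g / p) := by field_simp
    have : g = 0 := by nlinarith [sq_nonneg (g/p)]
    simp [this]
  · rw [max_eq_left h.le] at hq
    have hpx : p * xi < g := by
      have := (sub_neg.mp h)
      calc p * xi < p * (g/p) := by exact mul_lt_mul_of_pos_left this hp
        _ = g := by field_simp
    have hgpos : 0 < g := by nlinarith
    have hxi0 : xi = 0 := by
      by_contra hne
      have hxpos : 0 < xi := lt_of_le_of_ne hxi (Ne.symm hne)
      nlinarith [mul_lt_mul_of_pos_right hpx hxpos, mul_pos (mul_pos hp hxpos) hxpos]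
    exact ⟨hgpos.le, by simp [hxi0]⟩

/-- convergence of the objective values of the greedy CD method on the NQP
`min { F(x) = (1/2) xᵀ P x + dᵀ x : x ≥ 0 }` to the optimal value `F* = inf { F(x) : x ≥ 0 }`,
assuming the lower level set `{x ≥ 0 : F(x) ≤ F(x⁰)}` is compact. -/
theorem stmt3 (n : ℕ) (P : Matrix (Fin n) (Fin n) ℝ) (hP : P.PosSemidef)
    (hPdiag : ∀ i, 0 < P i i)
    (d : Fin n → ℝ) (F : (Fin n → ℝ) → ℝ)
    (hF : ∀ x, F x = (1 / 2) * (x ⬝ᵥ (P *ᵥ x)) + d ⬝ᵥ x)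
    (xhat : (Fin n → ℝ) → Fin n → ℝ)
    (hxhat : ∀ x i, xhat x i = max 0 (x i - (P *ᵥ x + d) i / P i i))
    (x : ℕ → Fin n → ℝ) (hx0 : 0 ≤ x 0)
    (ik : ℕ → Fin n)
    (hupd : ∀ k, x (k + 1) =
      x k + (xhat (x k) (ik k) - x k (ik k)) • (Pi.single (ik k) 1 : Fin n → ℝ))
    (hgreedy : ∀ k, ∀ i : Fin n,
      F (x (k + 1)) ≤ F (x k + (xhat (x k) i - x k i) • (Pi.single i 1 : Fin n → ℝ)))
    (hcompact : IsCompact {y : Fin n → ℝ | 0 ≤ y ∧ F y ≤ F (x 0)}) :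
    Tendsto (fun k => F (x k)) atTop (𝓝 (sInf (F '' {y : Fin n → ℝ | 0 ≤ y}))) := by
  -- continuity of F
  have hFeq : F = fun y => (1 / 2) * (y ⬝ᵥ (P *ᵥ y)) + d ⬝ᵥ y := funext hF
  have hFc : Continuous F := by
    rw [hFeq]; simp only [dotProduct, Matrix.mulVec]; fun_prop
  -- expansion of F along a coordinate step
  have hexp : ∀ (y : Fin n → ℝ) (i : Fin n) (δ : ℝ),
      F (y + δ • (Pi.single i 1 : Fin n → ℝ))
        = F y + ((P *ᵥ y + d) i) * δ + (1/2) * P i i * δ^2 := by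
    intro y i δ
    rw [hF, hF]
    exact cd_expandF P hP d y i δ
  -- coordinate update decreases F (given current point is nonneg at coordinate i)
  have hstep : ∀ (y : Fin n → ℝ) (i : Fin n) (t : ℝ), 0 ≤ t →
      F (y + (xhat y i - y i) • (Pi.single i 1 : Fin n → ℝ))
        ≤ F (y + (t - y i) • (Pi.single i 1 : Fin n → ℝ)) := by
    intro y i t ht
    rw [hexp, hexp, hxhat]
    have := cd_min1d (P i i) ((P *ᵥ y + d) i) (y i) (hPdiag i) t ht
    set g := (P *ᵥ y + d) i
    set p := P i i
    nlinarith [this]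
  -- nonnegativity of iterates
  have hxhat_nn : ∀ y i, 0 ≤ xhat y i := by intro y i; rw [hxhat]; exact le_max_left _ _
  have hxnn : ∀ k, 0 ≤ x k := by
    intro k
    induction k with
    | zero => exact hx0
    | succ m ih =>
      intro j
      rw [hupd m]
      rcases eq_or_ne j (ik m) with rfl | hj
      · simp [hxhat_nn]
      · simpa [Pi.single_eq_of_ne hj] using ih j
  -- F (x k) is antitone
  have hdec : ∀ k, F (x (k + 1)) ≤ F (x k) := by
    intro k
    cases isEmpty_or_nonempty (Fin n) with
    | inl h =>
      have : x (k+1) = x k := by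
        funext j; exact isEmptyElim j
      rw [this]
    | inr h =>
      obtain ⟨i⟩ := h
      refine (hgreedy k i).trans ?_
      have := hstep (x k) i (x k i) (hxnn k i)
      simpa using this
  have hanti : Antitone (fun k => F (x k)) :=
    antitone_nat_of_succ_le hdec
  -- membership in compact level set
  have hmem : ∀ k, x k ∈ {y : Fin n → ℝ | 0 ≤ y ∧ F y ≤ F (x 0)} := by
    intro k
    exact ⟨hxnn k, hanti (Nat.zero_le k)⟩
  -- convergent subsequence
  obtain ⟨xb, hxbmem, φ, hφ, hconv⟩ := hcompact.tendsto_subseq hmem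
  -- limit of the objective values
  have hbdd : BddBelow (Set.range fun k => F (x k)) := by
    obtain ⟨b, hb⟩ := (hcompact.image hFc).bddBelow
    exact ⟨b, by rintro z ⟨k, rfl⟩; exact hb ⟨x k, hmem k, rfl⟩⟩
  set L := ⨅ k, F (x k) with hLdef
  have hL : Tendsto (fun k => F (x k)) atTop (𝓝 L) := tendsto_atTop_ciInf hanti hbdd
  have hsub : Tendsto (fun j => F (x (φ j))) atTop (𝓝 L) := hL.comp hφ.tendsto_atTop
  have hsub2 : Tendsto (fun j => F (x (φ j))) atTop (𝓝 (F xb)) :=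
    (hFc.tendsto xb).comp hconv
  have hLxb : L = F xb := tendsto_nhds_unique hsub hsub2
  have hLle : ∀ k, L ≤ F (x k) := by
    intro k
    exact le_of_tendsto hL (eventually_atTop.2 ⟨k, fun m hm => hanti hm⟩)
  -- KKT conditions at xb
  have hkkt : ∀ i : Fin n, 0 ≤ (P *ᵥ xb + d) i ∧ (P *ᵥ xb + d) i * xb i = 0 := by
    intro i
    -- continuity of the coordinate-update map
    have hTc : Continuous (fun y : Fin n → ℝ =>
        y + (xhat y i - y i) • (Pi.single i 1 : Fin n → ℝ)) := by
      have : (fun y : Fin n → ℝ => y + (xhat y i - y i) • (Pi.single i 1 : Fin n → ℝ))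
          = fun y : Fin n → ℝ =>
            y + (max 0 (y i - (P *ᵥ y + d) i / P i i) - y i) • (Pi.single i 1 : Fin n → ℝ) := by
        funext y; rw [hxhat]
      rw [this]
      simp only [Matrix.mulVec, dotProduct, Pi.add_apply]
      fun_prop
    have h1 : ∀ j, L ≤ F (x (φ j) + (xhat (x (φ j)) i - x (φ j) i) • (Pi.single i 1 : Fin n → ℝ)) :=
      fun j => (hLle (φ j + 1)).trans (hgreedy (φ j) i)
    have h2 : Tendsto (fun j => F (x (φ j) + (xhat (x (φ j)) i - x (φ j) i) • (Pi.single i 1 : Fin n → ℝ)))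
        atTop (𝓝 (F (xb + (xhat xb i - xb i) • (Pi.single i 1 : Fin n → ℝ)))) :=
      ((hFc.comp hTc).tendsto xb).comp hconv
    have h3 : L ≤ F (xb + (xhat xb i - xb i) • (Pi.single i 1 : Fin n → ℝ)) :=
      ge_of_tendsto h2 (Eventually.of_forall h1)
    rw [hLxb, hexp, hxhat] at h3
    have hq : 0 ≤ (P *ᵥ xb + d) i * (max 0 (xb i - (P *ᵥ xb + d) i / P i i) - xb i)
        + P i i / 2 * (max 0 (xb i - (P *ᵥ xb + d) i / P i i) - xb i)^2 := by nlinarith [h3]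
    exact cd_kkt1d (P i i) ((P *ᵥ xb + d) i) (xb i) (hPdiag i) (hxbmem.1 i) hq
  -- xb is a global minimizer over the nonnegative orthant
  have hmin : ∀ y : Fin n → ℝ, 0 ≤ y → F xb ≤ F y := by
    intro y hy
    have hgrad := cd_gradIneq P hP d xb y
    have hdot : 0 ≤ (P *ᵥ xb + d) ⬝ᵥ (y - xb) := by
      rw [dotProduct_sub]
      have h1 : (P *ᵥ xb + d) ⬝ᵥ xb = 0 := by
        apply Finset.sum_eq_zero
        intro i _
        exact (hkkt i).2
      have h2 : 0 ≤ (P *ᵥ xb + d) ⬝ᵥ y := by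
        apply Finset.sum_nonneg
        intro i _
        exact mul_nonneg (hkkt i).1 (hy i)
      linarith
    rw [hF xb, hF y]
    calc (1/2) * (xb ⬝ᵥ (P *ᵥ xb)) + d ⬝ᵥ xb
        ≤ (1/2) * (xb ⬝ᵥ (P *ᵥ xb)) + d ⬝ᵥ xb + (P *ᵥ xb + d) ⬝ᵥ (y - xb) := by linarith
      _ ≤ (1/2) * (y ⬝ᵥ (P *ᵥ y)) + d ⬝ᵥ y := hgrad
  -- conclude
  have hleast : IsLeast (F '' {y : Fin n → ℝ | 0 ≤ y}) (F xb) :=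
    ⟨⟨xb, hxbmem.1, rfl⟩, by rintro z ⟨y, hy, rfl⟩; exact hmin y hy⟩
  rw [hleast.csInf_eq, ← hLxb]
  exact hL
end

section
/- Let P ∈ ℝ^{n×n} be symmetric positive semidefinite with P_{ii} > 0 for all i, let d ∈ ℝⁿ, and let F(x) = (1/2)xᵀPx + dᵀx. Let {x^k}_{k≥0} be a greedy CD sequence as in Theorem 1: x^0 ≥ 0; for each k, x^{k+1} = x^k + (x̂^k_{i_k} − x^k_{i_k})e_{i_k} with x̂^k_i = max(0, x^k_i − (Px^k + d)_i / P_{ii}) and F(x^{k+1}) ≤ F(x^k + (x̂^k_i − x^k_i)e_i) for all i; and suppose the level set {x ≥ 0 : F(x) ≤ F(x^0)} is compact. Then every cluster point x̄ of the sequence {x^k} satisfies x̄ ≥ 0 and F(x̄) ≤ F(x) for all x ≥ 0, i.e., x̄ is a global minimizer of F over the nonnegative orthant. -/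
open Matrix Finset Filter Topology

private lemma stmt4_key (xi gi Pii : ℝ) (hxi : 0 ≤ xi) (hPii : 0 < Pii) :
    (max 0 (xi - gi/Pii) - xi) * gi + Pii * (max 0 (xi - gi/Pii) - xi)^2 ≤ 0 := by
  rcases le_or_gt (xi - gi/Pii) 0 with hc | hc
  · rw [max_eq_left hc]
    have h2 : Pii * xi ≤ gi := by
      have h3 : xi ≤ gi / Pii := by linarith
      calc Pii * xi ≤ Pii * (gi / Pii) := by nlinarith
        _ = gi := by field_simp
    nlinarith
  · have e : max 0 (xi - gi/Pii) - xi = -(gi/Pii) := by rw [max_eq_right hc.le]; ring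
    rw [e]
    have hq : gi / Pii * Pii = gi := div_mul_cancel₀ _ hPii.ne'
    nlinarith [hq]

/-- every cluster point of the greedy CD sequence on the NQP
`min { F(x) = (1/2) xᵀ P x + dᵀ x : x ≥ 0 }` is a global minimizer of `F` over the
nonnegative orthant, assuming the lower level set `{x ≥ 0 : F(x) ≤ F(x⁰)}` is compact. -/
theorem stmt4 (n : ℕ) (P : Matrix (Fin n) (Fin n) ℝ) (hP : P.PosSemidef)
    (hPdiag : ∀ i, 0 < P i i)
    (d : Fin n → ℝ) (F : (Fin n → ℝ) → ℝ)
    (hF : ∀ x, F x = (1 / 2) * (x ⬝ᵥ (P *ᵥ x)) + d ⬝ᵥ x)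
    (xhat : (Fin n → ℝ) → Fin n → ℝ)
    (hxhat : ∀ x i, xhat x i = max 0 (x i - (P *ᵥ x + d) i / P i i))
    (x : ℕ → Fin n → ℝ) (hx0 : 0 ≤ x 0)
    (ik : ℕ → Fin n)
    (hupd : ∀ k, x (k + 1) =
      x k + (xhat (x k) (ik k) - x k (ik k)) • (Pi.single (ik k) 1 : Fin n → ℝ))
    (hgreedy : ∀ k, ∀ i : Fin n,
      F (x (k + 1)) ≤ F (x k + (xhat (x k) i - x k i) • (Pi.single i 1 : Fin n → ℝ)))
    (hcompact : IsCompact {y : Fin n → ℝ | 0 ≤ y ∧ F y ≤ F (x 0)}) :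
    ∀ xbar : Fin n → ℝ,
      (∃ φ : ℕ → ℕ, StrictMono φ ∧ Tendsto (fun k => x (φ k)) atTop (𝓝 xbar)) →
      0 ≤ xbar ∧ ∀ z : Fin n → ℝ, 0 ≤ z → F xbar ≤ F z := by
  -- symmetry of P
  have hs : Pᵀ = P := by simpa using (show P.IsSymm by simpa using hP.1).eq
  have hsym : ∀ a b : Fin n → ℝ, a ⬝ᵥ (P *ᵥ b) = b ⬝ᵥ (P *ᵥ a) := by
    intro a b
    have h1 : a ᵥ* P = P *ᵥ a := by rw [← hs, vecMul_transpose, hs]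
    rw [dotProduct_mulVec, h1, dotProduct_comm]
  -- quadratic expansion of F
  have hexp : ∀ y h : Fin n → ℝ,
      F (y + h) = F y + (P *ᵥ y + d) ⬝ᵥ h + (1/2) * (h ⬝ᵥ (P *ᵥ h)) := by
    intro y h
    rw [hF, hF]
    simp only [mulVec_add, dotProduct_add, add_dotProduct, hsym y h]
    rw [dotProduct_comm (P *ᵥ y) h]
    ring
  -- coordinate expansion
  have hcoord : ∀ (y : Fin n → ℝ) (i : Fin n) (t : ℝ),
      F (y + t • (Pi.single i 1 : Fin n → ℝ))
        = F y + t * (P *ᵥ y + d) i + (1/2) * (P i i * t^2) := by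
    intro y i t
    rw [hexp]
    congr 1
    · congr 1
      simp [dotProduct_smul]
    · simp [mulVec_smul, smul_dotProduct, dotProduct_smul, single_dotProduct]
      ring
  -- nonnegativity of all iterates
  have hnonneg : ∀ k, 0 ≤ x k := by
    intro k
    induction k with
    | zero => exact hx0
    | succ k ih =>
      intro j
      rw [hupd k]
      by_cases hj : j = ik k
      · subst hj
        have h4 : (x k + (xhat (x k) (ik k) - x k (ik k)) • (Pi.single (ik k) 1 : Fin n → ℝ)) (ik k)
            = xhat (x k) (ik k) := by
          simp [Pi.single_apply]
        rw [h4, hxhat]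
        exact le_max_left _ _
      · have : (x k + (xhat (x k) (ik k) - x k (ik k)) • (Pi.single (ik k) 1 : Fin n → ℝ)) j
            = x k j := by
          simp [Pi.single_apply, Ne.symm hj]
        rw [this]
        exact ih j
  -- descent inequality
  have hdescent : ∀ k (i : Fin n),
      F (x (k+1)) + (P i i / 2) * (xhat (x k) i - x k i)^2 ≤ F (x k) := by
    intro k i
    have h1 := hgreedy k i
    rw [hcoord (x k) i (xhat (x k) i - x k i)] at h1
    have h3 : (xhat (x k) i - x k i) * (P *ᵥ x k + d) i
        + P i i * (xhat (x k) i - x k i)^2 ≤ 0 := by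
      rw [hxhat]
      exact stmt4_key (x k i) ((P *ᵥ x k + d) i) (P i i) (hnonneg k i) (hPdiag i)
    nlinarith [h1, h3]
  -- antitone values
  have hanti : Antitone (fun k => F (x k)) := by
    apply antitone_nat_of_succ_le
    intro k
    have := hdescent k (ik k)
    nlinarith [sq_nonneg (xhat (x k) (ik k) - x k (ik k)), (hPdiag (ik k)).le]
  -- all iterates in the level set
  have hmem : ∀ k, x k ∈ {y : Fin n → ℝ | 0 ≤ y ∧ F y ≤ F (x 0)} := by
    intro k
    exact ⟨hnonneg k, hanti (Nat.zero_le k)⟩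
  -- continuity of F
  have hFc : Continuous F := by
    have hFe : F = fun y : Fin n → ℝ => (1/2) * (y ⬝ᵥ (P *ᵥ y)) + d ⬝ᵥ y := funext hF
    rw [hFe]
    simp only [dotProduct, mulVec]
    fun_prop
  -- F bounded below on the sequence
  obtain ⟨c, hc⟩ : BddBelow (F '' {y : Fin n → ℝ | 0 ≤ y ∧ F y ≤ F (x 0)}) :=
    (hcompact.image hFc).bddBelow
  have hbdd : BddBelow (Set.range fun k => F (x k)) := by
    refine ⟨c, ?_⟩
    rintro _ ⟨k, rfl⟩
    exact hc ⟨x k, hmem k, rfl⟩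
  -- convergence of F (x k)
  have hFconv : Tendsto (fun k => F (x k)) atTop (𝓝 (⨅ k, F (x k))) :=
    tendsto_atTop_ciInf hanti hbdd
  have hFconv' : Tendsto (fun k => F (x (k+1))) atTop (𝓝 (⨅ k, F (x k))) :=
    hFconv.comp (tendsto_add_atTop_nat 1)
  have hdiff : Tendsto (fun k => F (x k) - F (x (k+1))) atTop (𝓝 0) := by
    have := hFconv.sub hFconv'
    simpa using this
  -- the coordinate steps tend to zero
  have hstep : ∀ i : Fin n, Tendsto (fun k => xhat (x k) i - x k i) atTop (𝓝 0) := by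
    intro i
    have hsq : Tendsto (fun k => (xhat (x k) i - x k i)^2) atTop (𝓝 0) := by
      have hsq' : Tendsto (fun k => (P i i / 2) * (xhat (x k) i - x k i)^2) atTop (𝓝 0) := by
        apply squeeze_zero
          (fun k => mul_nonneg (by linarith [hPdiag i]) (sq_nonneg _)) (fun k => ?_) hdiff
        have := hdescent k i
        linarith
      have h5 := hsq'.const_mul (2 / P i i)
      rw [mul_zero] at h5
      have heq : (fun k => 2 / P i i * (P i i / 2 * (xhat (x k) i - x k i)^2))
          = fun k => (xhat (x k) i - x k i)^2 := by
        funext k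
        have h7 : 2 / P i i * (P i i / 2) = 1 := by
          have hne : P i i ≠ 0 := (hPdiag i).ne'
          field_simp
        calc 2 / P i i * (P i i / 2 * (xhat (x k) i - x k i)^2)
            = (2 / P i i * (P i i / 2)) * (xhat (x k) i - x k i)^2 := by ring
          _ = (xhat (x k) i - x k i)^2 := by rw [h7, one_mul]
      rw [← heq]
      exact h5
    have habs : Tendsto (fun k => |xhat (x k) i - x k i|) atTop (𝓝 0) := by
      have h6 := (Real.continuous_sqrt.tendsto 0).comp hsq
      simpa [Function.comp_def, Real.sqrt_sq_eq_abs] using h6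
    have h1 : Tendsto (fun k => -|xhat (x k) i - x k i|) atTop (𝓝 0) := by
      simpa using habs.neg
    exact tendsto_of_tendsto_of_tendsto_of_le_of_le h1 habs
      (fun k => neg_abs_le _) (fun k => le_abs_self _)
  -- now take a cluster point
  rintro xbar ⟨φ, hφ, hconv⟩
  -- fixed point property at xbar
  have hmax : ∀ i : Fin n, max 0 (xbar i - (P *ᵥ xbar + d) i / P i i) = xbar i := by
    intro i
    have hGc : Continuous (fun y : Fin n → ℝ =>
        max 0 (y i - (P *ᵥ y + d) i / P i i) - y i) := by
      simp only [mulVec, dotProduct, Pi.add_apply]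
      fun_prop
    have h1 : Tendsto (fun k => max 0 (x (φ k) i - (P *ᵥ x (φ k) + d) i / P i i) - x (φ k) i)
        atTop (𝓝 (max 0 (xbar i - (P *ᵥ xbar + d) i / P i i) - xbar i)) :=
      (hGc.tendsto xbar).comp hconv
    have h2 : Tendsto (fun k => max 0 (x (φ k) i - (P *ᵥ x (φ k) + d) i / P i i) - x (φ k) i)
        atTop (𝓝 0) := by
      have h2' := (hstep i).comp hφ.tendsto_atTop
      simp only [Function.comp_def] at h2'
      simpa only [hxhat] using h2' 
    have := tendsto_nhds_unique h1 h2
    linarith [this]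
  have hXnn : 0 ≤ xbar := by
    intro i
    rw [← hmax i]
    exact le_max_left _ _
  -- KKT conditions
  have hKKT : ∀ i : Fin n, 0 ≤ (P *ᵥ xbar + d) i ∧ (P *ᵥ xbar + d) i * xbar i = 0 := by
    intro i
    set g := (P *ᵥ xbar + d) i with hg
    rcases le_or_gt (xbar i - g / P i i) 0 with hcc | hcc
    · have h0 : xbar i = 0 := by rw [← hmax i, max_eq_left hcc]
      have hgd : 0 ≤ g / P i i := by rw [h0] at hcc; linarith
      have : 0 ≤ g := by
        have := div_mul_cancel₀ g (hPdiag i).ne'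
        nlinarith [hPdiag i]
      exact ⟨this, by rw [h0, mul_zero]⟩
    · have heq : xbar i - g / P i i = xbar i := by
        rw [← max_eq_right hcc.le]
        exact hmax i
      have hg0 : g = 0 := by
        have hdiv : g / P i i = 0 := by linarith
        have := div_mul_cancel₀ g (hPdiag i).ne'
        rw [hdiv] at this
        linarith
      exact ⟨hg0.ge, by rw [hg0, zero_mul]⟩
  refine ⟨hXnn, ?_⟩
  intro z hz
  have hzx : xbar + (z - xbar) = z := by abel
  have hE := hexp xbar (z - xbar)
  rw [hzx] at hE
  have hlin : 0 ≤ (P *ᵥ xbar + d) ⬝ᵥ (z - xbar) := by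
    rw [dotProduct]
    apply Finset.sum_nonneg
    intro i _
    have h1 := (hKKT i).1
    have h2 := (hKKT i).2
    have : (P *ᵥ xbar + d) i * (z - xbar) i = (P *ᵥ xbar + d) i * z i := by
      simp only [Pi.sub_apply]
      ring_nf
      nlinarith [h2]
    rw [this]
    exact mul_nonneg h1 (hz i)
  have hquad : 0 ≤ (z - xbar) ⬝ᵥ (P *ᵥ (z - xbar)) := by
    simpa using hP.dotProduct_mulVec_nonneg (z - xbar)
  linarith [hE, hlin, hquad]
end
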